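/- Let μ be an n-Ahlfors regular measure on ℝ^d (with constant C₀), let B₀ be a ball of radius r₀ centered on supp μ, and let ℓ be a line segment (or fixed axis) in B₀. Then there exists a radius r ∈ [r₀/2, r₀] such that the cylinder C of radius r around the axis satisfies the thin boundary condition: μ({x ∈ 3B₀ : dist(x, ∂_l C) ≤ t r}) ≤ C t r^n for all 0 < t ≤ 1, where ∂_l C is the lateral boundary {y : dist(y, ℓ) = r} and C depends only on C₀ and n. -/

import Mathlib

open MeasureTheory Metric ENNReal

/-- The support of a measure on a metric space. -/
def msupport {d : ℕ} (μ : Measure (EuclideanSpace ℝ (Fin d))) :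
    Set (EuclideanSpace ℝ (Fin d)) :=
  {x | ∀ r : ℝ, 0 < r → 0 < μ (ball x r)}

lemma msupport_compl_null {d : ℕ} (μ : Measure (EuclideanSpace ℝ (Fin d))) :
    μ (msupport μ)ᶜ = 0 := by
  have h : ∀ x : ((msupport μ)ᶜ : Set (EuclideanSpace ℝ (Fin d))),
      ∃ ρ : ℝ, 0 < ρ ∧ μ (ball (x : EuclideanSpace ℝ (Fin d)) ρ) = 0 := by
    rintro ⟨x, hx⟩
    simp only [msupport, Set.mem_compl_iff, Set.mem_setOf_eq, not_forall] at hx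
    obtain ⟨ρ, hρ, hμ⟩ := hx
    exact ⟨ρ, hρ, by simpa using hμ⟩
  choose rad hrad hnull using h
  obtain ⟨T, hTc, hTeq⟩ := TopologicalSpace.isOpen_iUnion_countable
      (fun x : ((msupport μ)ᶜ : Set (EuclideanSpace ℝ (Fin d))) =>
        ball (x : EuclideanSpace ℝ (Fin d)) (rad x)) (fun _ => isOpen_ball)
  have hsub : (msupport μ)ᶜ ⊆ ⋃ x ∈ T, ball (x : EuclideanSpace ℝ (Fin d)) (rad x) := by
    rw [hTeq]
    intro y hy
    exact Set.mem_iUnion.2 ⟨⟨y, hy⟩, mem_ball_self (hrad _)⟩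
  refine le_antisymm ?_ zero_le
  calc μ (msupport μ)ᶜ ≤ μ (⋃ x ∈ T, ball (x : EuclideanSpace ℝ (Fin d)) (rad x)) :=
        measure_mono hsub
    _ = 0 := (measure_biUnion_null_iff hTc).mpr fun x _ => hnull x

lemma packing_card {d : ℕ} (hd : 0 < d) {r₀ : ℝ} (hr₀ : 0 < r₀)
    (x₀ : EuclideanSpace ℝ (Fin d)) (F : Finset (EuclideanSpace ℝ (Fin d)))
    (hFsub : ∀ x ∈ F, x ∈ ball x₀ (3 * r₀))
    (hsep : ∀ x ∈ F, ∀ y ∈ F, x ≠ y → r₀ / 2 ≤ dist x y) :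
    (F.card : ℝ≥0∞) ≤ 16 ^ d := by
  haveI : Nonempty (Fin d) := ⟨⟨0, hd⟩⟩
  set G : ℝ := Real.sqrt Real.pi ^ d / Real.Gamma (d / 2 + 1) with hG
  have hGpos : 0 < G := by
    apply div_pos (pow_pos (Real.sqrt_pos.mpr Real.pi_pos) d)
    exact Real.Gamma_pos_of_pos (by positivity)
  have vb : ∀ (x : EuclideanSpace ℝ (Fin d)) (ρ : ℝ),
      volume (ball x ρ) = (ENNReal.ofReal ρ) ^ d * ENNReal.ofReal G := by
    intro x ρ
    rw [EuclideanSpace.volume_ball, Fintype.card_fin]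
  have disj : (↑F : Set (EuclideanSpace ℝ (Fin d))).PairwiseDisjoint
      (fun x => ball x (r₀ / 4)) := by
    intro x hx y hy hxy
    apply ball_disjoint_ball
    calc r₀ / 4 + r₀ / 4 = r₀ / 2 := by ring
      _ ≤ dist x y := hsep x hx y hy hxy
  have key : ∑ x ∈ F, volume (ball x (r₀ / 4)) = volume (⋃ x ∈ F, ball x (r₀ / 4)) :=
    (measure_biUnion_finset disj fun _ _ => measurableSet_ball).symm
  have hUsub : (⋃ x ∈ F, ball x (r₀ / 4)) ⊆ ball x₀ (4 * r₀) := by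
    intro z hz
    simp only [Set.mem_iUnion] at hz
    obtain ⟨x, hx, hz⟩ := hz
    have h1 : dist z x < r₀ / 4 := mem_ball.mp hz
    have h2 : dist x x₀ < 3 * r₀ := mem_ball.mp (hFsub x hx)
    have := dist_triangle z x x₀
    exact mem_ball.mpr (by linarith)
  have upper : ∑ x ∈ F, volume (ball x (r₀ / 4)) ≤ volume (ball x₀ (4 * r₀)) :=
    key ▸ measure_mono hUsub
  rw [Finset.sum_congr rfl (fun x _ => vb x (r₀ / 4)), Finset.sum_const, vb] at upper
  set a : ℝ≥0∞ := (ENNReal.ofReal (r₀ / 4)) ^ d * ENNReal.ofReal G with ha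
  have h16 : (ENNReal.ofReal (4 * r₀)) ^ d * ENNReal.ofReal G = 16 ^ d * a := by
    have : (4 * r₀ : ℝ) = 16 * (r₀ / 4) := by ring
    rw [ha, this, ENNReal.ofReal_mul (by norm_num : (0:ℝ) ≤ 16), mul_pow, ← mul_assoc]
    norm_num
  rw [h16] at upper
  have ha0 : a ≠ 0 := by
    apply mul_ne_zero
    · exact pow_ne_zero _ (ENNReal.ofReal_pos.mpr (by linarith)).ne'
    · exact (ENNReal.ofReal_pos.mpr hGpos).ne'
  have hatop : a ≠ ⊤ := by
    apply ENNReal.mul_ne_top (pow_ne_top ENNReal.ofReal_ne_top) ENNReal.ofReal_ne_top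
  rw [nsmul_eq_mul] at upper
  exact (ENNReal.mul_le_mul_iff_left ha0 hatop).mp upper

lemma mass_bound {d n : ℕ} (hd : 0 < d) {C₀ : ℝ} (hC₀ : 0 < C₀)
    (μ : Measure (EuclideanSpace ℝ (Fin d)))
    (hreg : ∀ x ∈ msupport μ, ∀ ρ : ℝ, 0 < ρ → ENNReal.ofReal ρ ≤ EMetric.diam (msupport μ) →
        μ (ball x ρ) ≤ ENNReal.ofReal (C₀ * ρ ^ n))
    (x₀ : EuclideanSpace ℝ (Fin d)) {r₀ : ℝ} (hr₀ : 0 < r₀)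
    (hdiam : ENNReal.ofReal r₀ ≤ EMetric.diam (msupport μ)) :
    μ (ball x₀ (3 * r₀)) ≤ ENNReal.ofReal (16 ^ d * C₀ * r₀ ^ n) := by
  classical
  set S' : Set (EuclideanSpace ℝ (Fin d)) := msupport μ ∩ ball x₀ (3 * r₀) with hS'
  set 𝒜 : Set (Set (EuclideanSpace ℝ (Fin d))) :=
    {F | F ⊆ S' ∧ F.Pairwise fun x y => r₀ / 2 ≤ dist x y} with h𝒜
  obtain ⟨m, hm⟩ := zorn_subset 𝒜 (by
    intro c hc hchain
    refine ⟨⋃₀ c, ⟨Set.sUnion_subset fun s hs => (hc hs).1, ?_⟩, fun s hs => Set.subset_sUnion_of_mem hs⟩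
    intro x hx y hy hxy
    obtain ⟨s, hs, hxs⟩ := hx
    obtain ⟨t, ht, hyt⟩ := hy
    rcases hchain.total hs ht with h | h
    · exact (hc ht).2 (h hxs) hyt hxy
    · exact (hc hs).2 hxs (h hyt) hxy)
  have hmA : m ∈ 𝒜 := hm.prop
  have hcard : ∀ F : Finset (EuclideanSpace ℝ (Fin d)), ↑F ⊆ m → (F.card : ℝ≥0∞) ≤ 16 ^ d := by
    intro F hF
    refine packing_card hd hr₀ x₀ F (fun x hx => (hmA.1 (hF hx)).2) ?_
    intro x hx y hy hxy
    exact hmA.2 (hF hx) (hF hy) hxy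
  have hfin : m.Finite := by
    rcases m.finite_or_infinite with h | h
    · exact h
    · exfalso
      obtain ⟨t, hts, htf, hcardt⟩ := h.exists_subset_ncard_eq (16 ^ d + 1)
      have h1 := hcard htf.toFinset (by rw [Set.Finite.coe_toFinset]; exact hts)
      rw [Set.ncard_eq_toFinset_card t htf] at hcardt
      rw [hcardt] at h1
      have h2 : ((16 ^ d + 1 : ℕ) : ℝ≥0∞) ≤ ((16 ^ d : ℕ) : ℝ≥0∞) := by
        push_cast
        convert h1 using 2 <;> norm_num
      have := Nat.cast_le.mp h2
      omega
  have hcov : S' ⊆ ⋃ x ∈ hfin.toFinset, ball x (r₀ / 2) := by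
    intro y hy
    by_contra hnot
    simp only [Set.mem_iUnion, Set.Finite.mem_toFinset, not_exists, mem_ball, not_and, not_lt] at hnot
    have hsepy : ∀ x ∈ m, r₀ / 2 ≤ dist y x := fun x hx => hnot x hx
    have hym : y ∉ m := by
      intro hym
      have := hsepy y hym
      simp only [dist_self] at this
      linarith
    have hins : insert y m ∈ 𝒜 := by
      constructor
      · exact Set.insert_subset hy hmA.1
      · rw [Set.pairwise_insert]
        exact ⟨hmA.2, fun b hb _ => ⟨hsepy b hb, by rw [dist_comm]; exact hsepy b hb⟩⟩
    have := hm.2 hins (Set.subset_insert y m) (Set.mem_insert y m)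
    exact hym this
  have hball : μ (ball x₀ (3 * r₀)) ≤ μ S' := by
    have hsub : ball x₀ (3 * r₀) ⊆ S' ∪ (msupport μ)ᶜ := by
      intro y hy
      by_cases h : y ∈ msupport μ
      · exact Or.inl ⟨h, hy⟩
      · exact Or.inr h
    calc μ (ball x₀ (3 * r₀)) ≤ μ (S' ∪ (msupport μ)ᶜ) := measure_mono hsub
      _ ≤ μ S' + μ (msupport μ)ᶜ := measure_union_le _ _
      _ = μ S' := by rw [msupport_compl_null, add_zero]
  have hhalf : ∀ x ∈ hfin.toFinset, μ (ball x (r₀ / 2)) ≤ ENNReal.ofReal (C₀ * (r₀ / 2) ^ n) := by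
    intro x hx
    rw [Set.Finite.mem_toFinset] at hx
    exact hreg x (hmA.1 hx).1 (r₀ / 2) (by linarith)
      (le_trans (ENNReal.ofReal_le_ofReal (by linarith)) hdiam)
  calc μ (ball x₀ (3 * r₀)) ≤ μ S' := hball
    _ ≤ μ (⋃ x ∈ hfin.toFinset, ball x (r₀ / 2)) := measure_mono hcov
    _ ≤ ∑ x ∈ hfin.toFinset, μ (ball x (r₀ / 2)) := measure_biUnion_finset_le _ _
    _ ≤ ∑ _x ∈ hfin.toFinset, ENNReal.ofReal (C₀ * (r₀ / 2) ^ n) := Finset.sum_le_sum hhalf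
    _ = (hfin.toFinset.card : ℝ≥0∞) * ENNReal.ofReal (C₀ * (r₀ / 2) ^ n) := by
        rw [Finset.sum_const, nsmul_eq_mul]
    _ ≤ (16 : ℝ≥0∞) ^ d * ENNReal.ofReal (C₀ * (r₀ / 2) ^ n) := by
        gcongr
        exact hcard hfin.toFinset (by rw [Set.Finite.coe_toFinset])
    _ ≤ ENNReal.ofReal (16 ^ d * C₀ * r₀ ^ n) := by
        have h16 : (16 : ℝ≥0∞) ^ d = ENNReal.ofReal ((16 : ℝ) ^ d) := by
          rw [ENNReal.ofReal_pow (by norm_num)]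
          norm_num
        rw [h16, ← ENNReal.ofReal_mul (by positivity)]
        apply ENNReal.ofReal_le_ofReal
        have hpow : (r₀ / 2) ^ n ≤ r₀ ^ n :=
          pow_le_pow_left₀ (by positivity) (by linarith) n
        calc (16:ℝ) ^ d * (C₀ * (r₀ / 2) ^ n) = 16 ^ d * C₀ * (r₀ / 2) ^ n := by ring
          _ ≤ 16 ^ d * C₀ * r₀ ^ n := by
            apply mul_le_mul_of_nonneg_left hpow (by positivity)

lemma bad_volume {ν : Measure ℝ} {M lam : ℝ} (hM : 0 < M) (hlam : 0 < lam)
    (hν : ν Set.univ ≤ ENNReal.ofReal M) :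
    volume {r : ℝ | ∃ s : ℝ, 0 < s ∧
        ENNReal.ofReal (lam * s) < ν (Set.Icc (r - s) (r + s))} ≤
      ENNReal.ofReal (8 * M / lam) := by
  classical
  haveI : IsFiniteMeasure ν :=
    ⟨lt_of_le_of_lt (le_trans (measure_mono (Set.subset_univ _)) hν) ENNReal.ofReal_lt_top⟩
  set Bad : Set ℝ := {r : ℝ | ∃ s : ℝ, 0 < s ∧
      ENNReal.ofReal (lam * s) < ν (Set.Icc (r - s) (r + s))} with hBad
  set sfun : ℝ → ℝ := fun r =>
    if h : ∃ s : ℝ, 0 < s ∧ ENNReal.ofReal (lam * s) < ν (Set.Icc (r - s) (r + s))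
    then h.choose else 0 with hsfun
  have hspec : ∀ r ∈ Bad, 0 < sfun r ∧
      ENNReal.ofReal (lam * sfun r) < ν (Set.Icc (r - sfun r) (r + sfun r)) := by
    intro r hr
    have hr' : ∃ s : ℝ, 0 < s ∧ ENNReal.ofReal (lam * s) < ν (Set.Icc (r - s) (r + s)) := hr
    have : sfun r = hr'.choose := by rw [hsfun]; exact dif_pos hr'
    rw [this]
    exact hr'.choose_spec
  have hs_pos : ∀ r ∈ Bad, 0 < sfun r := fun r hr => (hspec r hr).1
  have hs_lt : ∀ r ∈ Bad,
      ENNReal.ofReal (lam * sfun r) < ν (Set.Icc (r - sfun r) (r + sfun r)) :=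
    fun r hr => (hspec r hr).2
  have hs_le : ∀ r ∈ Bad, sfun r ≤ M / lam := by
    intro r hr
    have h1 : ENNReal.ofReal (lam * sfun r) < ENNReal.ofReal M :=
      lt_of_lt_of_le (hs_lt r hr) (le_trans (measure_mono (Set.subset_univ _)) hν)
    have h2 : lam * sfun r < M := by
      by_contra hcon
      push_neg at hcon
      exact absurd (lt_of_le_of_lt (ENNReal.ofReal_le_ofReal hcon) h1) (lt_irrefl _)
    rw [le_div_iff₀ hlam, mul_comm]
    exact h2.le
  obtain ⟨u, huB, hdisj, hcov⟩ :=
    Vitali.exists_disjoint_subfamily_covering_enlargement_closedBall Bad id sfun (M / lam)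
      (fun a ha => hs_le a ha) 4 (by norm_num)
  have hBadsub : Bad ⊆ ⋃ b ∈ u, closedBall b (4 * sfun b) := by
    intro a ha
    obtain ⟨b, hb, hsub⟩ := hcov a ha
    exact Set.mem_biUnion hb (hsub (mem_closedBall_self (hs_pos a ha).le))
  have hIcc : ∀ b : ℝ, closedBall b (sfun b) = Set.Icc (b - sfun b) (b + sfun b) :=
    fun b => Real.closedBall_eq_Icc
  have hpos : ∀ b : u, 0 < ν (closedBall (b : ℝ) (sfun b)) := by
    intro b
    rw [hIcc]
    refine lt_trans ?_ (hs_lt b (huB b.2))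
    exact ENNReal.ofReal_pos.mpr (mul_pos hlam (hs_pos b (huB b.2)))
  have hcount : u.Countable := by
    have hc := MeasureTheory.Measure.countable_meas_pos_of_disjoint_iUnion (μ := ν)
      (As := fun b : u => closedBall (b : ℝ) (sfun b)) (fun _ => measurableSet_closedBall)
      (fun i j hij => hdisj i.2 j.2 (fun h => hij (Subtype.ext h)))
    have h2 : {i : u | 0 < ν (closedBall (i : ℝ) (sfun i))} = Set.univ :=
      Set.eq_univ_of_forall hpos
    rw [h2] at hc
    haveI : Countable u := Set.countable_univ_iff.mp hc
    exact Set.countable_coe_iff.mp this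
  calc volume Bad ≤ volume (⋃ b ∈ u, closedBall b (4 * sfun b)) := measure_mono hBadsub
    _ ≤ ∑' b : u, volume (closedBall (b : ℝ) (4 * sfun b)) := measure_biUnion_le _ hcount _
    _ ≤ ∑' b : u, ENNReal.ofReal (8 / lam) * ν (closedBall (b : ℝ) (sfun b)) := by
        apply ENNReal.tsum_le_tsum
        intro b
        rw [Real.volume_closedBall]
        have heq : (2 * (4 * sfun b) : ℝ) = 8 / lam * (lam * sfun b) := by
          field_simp; ring
        rw [heq, ENNReal.ofReal_mul (by positivity)]
        have h3 : ENNReal.ofReal (lam * sfun (b : ℝ)) ≤ ν (closedBall (b : ℝ) (sfun b)) := by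
          rw [hIcc]
          exact (hs_lt b (huB b.2)).le
        gcongr
    _ = ENNReal.ofReal (8 / lam) * ∑' b : u, ν (closedBall (b : ℝ) (sfun b)) :=
        ENNReal.tsum_mul_left
    _ ≤ ENNReal.ofReal (8 / lam) * ENNReal.ofReal M := by
        gcongr
        calc ∑' b : u, ν (closedBall (b : ℝ) (sfun b))
            = ν (⋃ b ∈ u, closedBall (b : ℝ) (sfun b)) :=
              (measure_biUnion hcount hdisj (fun b _ => measurableSet_closedBall)).symm
          _ ≤ ν Set.univ := measure_mono (Set.subset_univ _)
          _ ≤ ENNReal.ofReal M := hν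
    _ = ENNReal.ofReal (8 * M / lam) := by
        rw [← ENNReal.ofReal_mul (by positivity)]
        congr 1
        field_simp

/-- Existence of a radius r ∈ [r₀/2, r₀] whose cylinder around the axis ℓ has a thin lateral
    boundary: μ({x ∈ 3B₀ : dist(x, ∂_l C) ≤ t r}) ≤ C t r₀ⁿ for all 0 < t ≤ 1. -/
theorem stmt10 (d n : ℕ) (hn : 1 ≤ n) (C₀ : ℝ) (hC₀ : 0 < C₀) :
    ∃ C : ℝ, 0 < C ∧
      ∀ (μ : Measure (EuclideanSpace ℝ (Fin d))),
        (∀ x ∈ msupport μ, ∀ ρ : ℝ, 0 < ρ → ENNReal.ofReal ρ ≤ EMetric.diam (msupport μ) →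
          ENNReal.ofReal (C₀⁻¹ * ρ ^ n) ≤ μ (ball x ρ) ∧
            μ (ball x ρ) ≤ ENNReal.ofReal (C₀ * ρ ^ n)) →
        ∀ x₀ ∈ msupport μ, ∀ r₀ : ℝ, 0 < r₀ →
          ENNReal.ofReal r₀ ≤ EMetric.diam (msupport μ) →
          ∀ ℓ : Set (EuclideanSpace ℝ (Fin d)), ℓ.Nonempty → ℓ ⊆ ball x₀ r₀ →
            ∃ r ∈ Set.Icc (r₀ / 2) r₀,
              ∀ t : ℝ, 0 < t → t ≤ 1 →
                μ {x ∈ ball x₀ (3 * r₀) | |infDist x ℓ - r| ≤ t * r} ≤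
                  ENNReal.ofReal (C * t * r₀ ^ n) := by
  refine ⟨40 * 16 ^ d * C₀, by positivity, ?_⟩
  intro μ hreg x₀ hx₀ r₀ hr₀ hdiam ℓ hℓne hℓsub
  by_cases hd : 0 < d
  swap
  · -- d = 0 : the space is a subsingleton, contradicting r₀ ≤ diam
    exfalso
    have hd0 : d = 0 := by omega
    subst hd0
    haveI : Subsingleton (EuclideanSpace ℝ (Fin 0)) :=
      ⟨fun a b => by ext i; exact absurd i.2 (by omega)⟩
    have h1 : EMetric.diam (msupport μ) = 0 :=
      EMetric.diam_subsingleton (Set.subsingleton_of_subsingleton)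
    rw [h1] at hdiam
    exact absurd (le_antisymm hdiam zero_le) (ENNReal.ofReal_pos.mpr hr₀).ne'
  -- main case
  have hf : Measurable fun x : EuclideanSpace ℝ (Fin d) => infDist x ℓ :=
    (continuous_infDist_pt ℓ).measurable
  set f : EuclideanSpace ℝ (Fin d) → ℝ := fun x => infDist x ℓ with hfdef
  set ν : Measure ℝ := Measure.map f (μ.restrict (ball x₀ (3 * r₀))) with hν
  set M : ℝ := 16 ^ d * C₀ * r₀ ^ n with hM
  have hMpos : 0 < M := by positivity
  have hνuniv : ν Set.univ ≤ ENNReal.ofReal M := by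
    rw [hν, Measure.map_apply hf MeasurableSet.univ, Set.preimage_univ,
      Measure.restrict_apply_univ]
    exact mass_bound hd hC₀ μ (fun x hx ρ h1 h2 => (hreg x hx ρ h1 h2).2) x₀ hr₀ hdiam
  set lam : ℝ := 40 * M / r₀ with hlam
  have hlampos : 0 < lam := by positivity
  have hbad := bad_volume (ν := ν) hMpos hlampos hνuniv
  have hcomp : (8 : ℝ) * M / lam = r₀ / 5 := by
    rw [hlam]
    field_simp
    ring
  rw [hcomp] at hbad
  set Bad : Set ℝ := {r : ℝ | ∃ s : ℝ, 0 < s ∧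
      ENNReal.ofReal (lam * s) < ν (Set.Icc (r - s) (r + s))} with hBad
  have hnotsub : ¬ (Set.Icc (r₀ / 2) r₀ ⊆ Bad) := by
    intro hsub
    have h1 : volume (Set.Icc (r₀ / 2) r₀) ≤ ENNReal.ofReal (r₀ / 5) :=
      le_trans (measure_mono hsub) hbad
    rw [Real.volume_Icc] at h1
    have h2 : (r₀ - r₀ / 2 : ℝ) = r₀ / 2 := by ring
    rw [h2] at h1
    have h3 : ENNReal.ofReal (r₀ / 5) < ENNReal.ofReal (r₀ / 2) :=
      (ENNReal.ofReal_lt_ofReal_iff (by linarith)).mpr (by linarith)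
    exact absurd (lt_of_le_of_lt h1 h3) (lt_irrefl _)
  obtain ⟨r, hrIcc, hrBad⟩ := Set.not_subset.mp hnotsub
  have hrpos : 0 < r := lt_of_lt_of_le (by linarith) hrIcc.1
  have hgood : ∀ s : ℝ, 0 < s → ν (Set.Icc (r - s) (r + s)) ≤ ENNReal.ofReal (lam * s) := by
    intro s hs
    by_contra hcon
    push_neg at hcon
    exact hrBad ⟨s, hs, hcon⟩
  refine ⟨r, hrIcc, ?_⟩
  intro t ht ht1
  have htr : 0 < t * r := mul_pos ht hrpos
  have hset : {x ∈ ball x₀ (3 * r₀) | |infDist x ℓ - r| ≤ t * r} =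
      f ⁻¹' (Set.Icc (r - t * r) (r + t * r)) ∩ ball x₀ (3 * r₀) := by
    ext x
    constructor
    · rintro ⟨hb, habs⟩
      rw [abs_le] at habs
      exact ⟨⟨by simpa using by linarith [habs.1], by simpa using by linarith [habs.2]⟩, hb⟩
    · rintro ⟨hmem, hb⟩
      obtain ⟨h1, h2⟩ := hmem
      refine ⟨hb, ?_⟩
      rw [abs_le]
      constructor <;> [linarith [h1]; linarith [h2]]
  have hμν : μ {x ∈ ball x₀ (3 * r₀) | |infDist x ℓ - r| ≤ t * r} =
      ν (Set.Icc (r - t * r) (r + t * r)) := by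
    rw [hset, hν, Measure.map_apply hf measurableSet_Icc,
      Measure.restrict_apply (hf measurableSet_Icc)]
  rw [hμν]
  refine le_trans (hgood (t * r) htr) (ENNReal.ofReal_le_ofReal ?_)
  have h1 : lam * (t * r) ≤ lam * (t * r₀) := by
    apply mul_le_mul_of_nonneg_left _ hlampos.le
    exact mul_le_mul_of_nonneg_left hrIcc.2 ht.le
  have h2 : lam * (t * r₀) = 40 * 16 ^ d * C₀ * t * r₀ ^ n := by
    rw [hlam, hM]
    field_simp
  linarith
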